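/- arXiv:2109.07862 — 2 statements merged into one kernel-verified Lean document; each statement's English description precedes it below -/
import Mathlib

section
/- For ν ∈ (0,1), λ > 0 and x > 0, the two expressions x · sup_{η<0} { η/x − log(λ/(λ + (−η)^ν)) } and sup_{θ>0} { θx − (λ(e^θ − 1))^{1/ν} } are equal. -/
open Real Pointwise

theorem stmt6 (ν lam x : ℝ) (hν : ν ∈ Set.Ioo (0:ℝ) 1) (hlam : 0 < lam) (hx : 0 < x) :
    x * sSup ((fun η : ℝ => η / x - Real.log (lam / (lam + (-η) ^ ν))) '' Set.Iio 0) =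
      sSup ((fun θ : ℝ => θ * x - (lam * (Real.exp θ - 1)) ^ (1 / ν)) '' Set.Ioi 0) := by
  obtain ⟨hν0, hν1⟩ := hν
  have hνne : ν ≠ 0 := hν0.ne'
  have key : x • ((fun η : ℝ => η / x - Real.log (lam / (lam + (-η) ^ ν))) '' Set.Iio 0) =
      (fun θ : ℝ => θ * x - (lam * (Real.exp θ - 1)) ^ (1 / ν)) '' Set.Ioi 0 := by
    rw [← Set.image_smul]
    ext y
    simp only [Set.mem_image, Set.mem_Iio, Set.mem_Ioi, smul_eq_mul]
    constructor
    · rintro ⟨_, ⟨η, hη, rfl⟩, rfl⟩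
      have hηpos : 0 < -η := by linarith
      have ht : 0 < (-η) ^ ν := Real.rpow_pos_of_pos hηpos ν
      have hlt : 0 < lam + (-η) ^ ν := by linarith
      refine ⟨Real.log (lam + (-η) ^ ν) - Real.log lam, ?_, ?_⟩
      · have : Real.log lam < Real.log (lam + (-η) ^ ν) :=
          Real.log_lt_log hlam (by linarith)
        linarith
      · have hexp : Real.exp (Real.log (lam + (-η) ^ ν) - Real.log lam)
            = (lam + (-η) ^ ν) / lam := by
          rw [Real.exp_sub, Real.exp_log hlt, Real.exp_log hlam]
        have hA : lam * (Real.exp (Real.log (lam + (-η) ^ ν) - Real.log lam) - 1)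
            = (-η) ^ ν := by
          rw [hexp]; field_simp; ring
        have hB : ((-η) ^ ν) ^ (1 / ν) = -η := by
          rw [← Real.rpow_mul hηpos.le, mul_one_div, div_self hνne, Real.rpow_one]
        have hlog : Real.log (lam / (lam + (-η) ^ ν))
            = Real.log lam - Real.log (lam + (-η) ^ ν) :=
          Real.log_div hlam.ne' hlt.ne'
        rw [hA, hB, hlog]
        field_simp
        ring
    · rintro ⟨θ, hθ, rfl⟩
      have hexp1 : (1:ℝ) < Real.exp θ := by
        rw [← Real.exp_zero]; exact Real.exp_lt_exp.2 hθ
      have ha : 0 < lam * (Real.exp θ - 1) := by nlinarith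
      have haν : 0 < (lam * (Real.exp θ - 1)) ^ (1 / ν) := Real.rpow_pos_of_pos ha _
      refine ⟨-(lam * (Real.exp θ - 1)) ^ (1 / ν) / x
          - Real.log (lam / (lam + (- (-(lam * (Real.exp θ - 1)) ^ (1 / ν))) ^ ν)),
        ⟨-(lam * (Real.exp θ - 1)) ^ (1 / ν), by linarith, rfl⟩, ?_⟩
      have hpow : (- (-(lam * (Real.exp θ - 1)) ^ (1 / ν))) ^ ν = lam * (Real.exp θ - 1) := by
        rw [neg_neg, ← Real.rpow_mul ha.le, one_div, inv_mul_cancel₀ hνne, Real.rpow_one]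
      rw [hpow]
      have hsum : lam + lam * (Real.exp θ - 1) = lam * Real.exp θ := by ring
      have hlog : Real.log (lam / (lam + lam * (Real.exp θ - 1))) = -θ := by
        rw [hsum]
        rw [show lam / (lam * Real.exp θ) = Real.exp (-θ) by
          rw [Real.exp_neg]
          field_simp]
        exact Real.log_exp _
      rw [hlog]
      field_simp
      ring
  rw [← key, Real.sSup_smul_of_nonneg hx.le, smul_eq_mul]
end

section
/- Let E_ν(x) = Σ_{k≥0} x^k/Γ(νk+1) be the Mittag-Leffler function with ν ∈ (0,1). If c > 0, then lim_{t→∞} (1/t) log E_ν(c t^ν) = c^{1/ν}. -/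
open Real Filter
open scoped Nat


lemma ML.fact_mul_exp_le : ∀ n : ℕ, 1 ≤ n → (n ! : ℝ) * Real.exp ((n:ℝ) - 1) ≤ (n:ℝ) ^ (n+1) := by
  intro n hn
  induction n, hn using Nat.le_induction with
  | base => simp [Nat.factorial]
  | succ n hn ih =>
    have hn0 : (0:ℝ) < n := by exact_mod_cast hn
    have h1 : Real.exp (1/((n:ℝ)+1)) ≤ ((n:ℝ)+1)/n := by
      rw [← Real.exp_log (show (0:ℝ) < ((n:ℝ)+1)/n by positivity), Real.exp_le_exp]
      have h2 := Real.log_le_sub_one_of_pos (show (0:ℝ) < (n:ℝ)/((n:ℝ)+1) by positivity)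
      have h3 : Real.log ((n:ℝ)/((n:ℝ)+1)) = - Real.log (((n:ℝ)+1)/n) := by
        rw [← Real.log_inv]
        congr 1
        field_simp
      have h4 : (n:ℝ)/((n:ℝ)+1) - 1 = -(1/((n:ℝ)+1)) := by field_simp; ring
      rw [h3, h4] at h2
      linarith
    have hkey : Real.exp 1 * (n:ℝ)^(n+1) ≤ ((n:ℝ)+1)^(n+1) := by
      have h5 := pow_le_pow_left₀ (Real.exp_pos _).le h1 (n+1)
      rw [← Real.exp_nat_mul, div_pow] at h5
      have h6 : ((n:ℕ)+1 : ℝ) * (1/((n:ℝ)+1)) = 1 := by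
        push_cast
        field_simp
      rw [show ((n+1 : ℕ):ℝ) * (1/((n:ℝ)+1)) = 1 by push_cast; field_simp] at h5
      have h7 : (0:ℝ) < (n:ℝ)^(n+1) := by positivity
      calc Real.exp 1 * (n:ℝ)^(n+1) ≤ (((n:ℝ)+1)^(n+1) / (n:ℝ)^(n+1)) * (n:ℝ)^(n+1) := by
            exact mul_le_mul_of_nonneg_right h5 h7.le
        _ = ((n:ℝ)+1)^(n+1) := by field_simp
    have hfe : Real.exp (((n:ℕ)+1:ℝ) - 1) = Real.exp ((n:ℝ)-1) * Real.exp 1 := by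
      rw [← Real.exp_add]; push_cast; ring_nf
    have hfac : ((n+1)! : ℝ) = ((n:ℝ)+1) * (n ! : ℝ) := by
      rw [Nat.factorial_succ]; push_cast; ring
    have hexp1 : (0:ℝ) < Real.exp 1 := Real.exp_pos 1
    have hfp : (0:ℝ) < (n ! : ℝ) := by exact_mod_cast n.factorial_pos
    calc ((n+1)! : ℝ) * Real.exp (((n+1:ℕ):ℝ) - 1)
        = ((n:ℝ)+1) * (((n !:ℝ)) * Real.exp ((n:ℝ)-1)) * Real.exp 1 := by
          push_cast [Nat.factorial_succ]
          rw [show ((n:ℝ)+1) - 1 = ((n:ℝ)-1) + 1 by ring, Real.exp_add]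
          ring
      _ ≤ ((n:ℝ)+1) * ((n:ℝ)^(n+1)) * Real.exp 1 := by
          apply mul_le_mul_of_nonneg_right _ hexp1.le
          exact mul_le_mul_of_nonneg_left ih (by positivity)
      _ = ((n:ℝ)+1) * (Real.exp 1 * (n:ℝ)^(n+1)) := by ring
      _ ≤ ((n:ℝ)+1) * (((n:ℝ)+1)^(n+1)) := mul_le_mul_of_nonneg_left hkey (by positivity)
      _ = ((n:ℝ)+1)^(n+2) := by ring
      _ = (((n+1:ℕ)) : ℝ)^(n+1+1) := by push_cast; ring

lemma ML.log_factorial_le (m : ℕ) (hm : 1 ≤ m) :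
    Real.log (m !) ≤ ((m:ℝ)+1) * Real.log m - ((m:ℝ) - 1) := by
  have h := ML.fact_mul_exp_le m hm
  have hfac : (0:ℝ) < (m ! : ℝ) := by exact_mod_cast m.factorial_pos
  have h2 := Real.log_le_log (by positivity) h
  rw [Real.log_mul (ne_of_gt hfac) (Real.exp_ne_zero _), Real.log_exp, Real.log_pow] at h2
  push_cast at h2 ⊢
  linarith
lemma ML.gamma_lower (y : ℝ) (hy : 0 ≤ y) : (⌊y⌋₊ ! : ℝ) / 2 ≤ Real.Gamma (y + 1) := by
  have hmono := Real.Gamma_strictMonoOn_Ici.monotoneOn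
  rcases lt_or_ge y 1 with h1 | h1
  · have hfl : ⌊y⌋₊ = 0 := Nat.floor_eq_zero.mpr h1
    rw [hfl]
    have h2 : Real.Gamma (y+2) = (y+1) * Real.Gamma (y+1) := by
      rw [show y+2 = y+1+1 by ring]
      exact Real.Gamma_add_one (by linarith)
    have h3 : 1 ≤ Real.Gamma (y+2) := by
      have := hmono (Set.mem_Ici.mpr le_rfl) (Set.mem_Ici.mpr (by linarith : (2:ℝ) ≤ y+2)) (by linarith)
      rwa [Real.Gamma_two] at this
    have hpos : 0 < Real.Gamma (y+1) := Real.Gamma_pos_of_pos (by linarith)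
    simp only [Nat.factorial_zero, Nat.cast_one]
    nlinarith
  · have hn1 : 1 ≤ ⌊y⌋₊ := (Nat.one_le_floor_iff y).mpr h1
    have hfl : (⌊y⌋₊ : ℝ) ≤ y := Nat.floor_le hy
    have h2 : (2:ℝ) ≤ (⌊y⌋₊:ℝ) + 1 := by
      have : (1:ℝ) ≤ (⌊y⌋₊:ℝ) := by exact_mod_cast hn1
      linarith
    have h3 := hmono (Set.mem_Ici.mpr h2) (Set.mem_Ici.mpr (by linarith : (2:ℝ) ≤ y+1)) (by linarith)
    rw [Real.Gamma_nat_eq_factorial] at h3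
    have hfp : (0:ℝ) ≤ (⌊y⌋₊ ! : ℝ) := by positivity
    linarith

lemma ML.gamma_upper (y : ℝ) (hy : 1 ≤ y) : Real.Gamma (y + 1) ≤ (⌈y⌉₊ ! : ℝ) := by
  have hc : y ≤ (⌈y⌉₊:ℝ) := Nat.le_ceil y
  have h := Real.Gamma_strictMonoOn_Ici.monotoneOn
    (Set.mem_Ici.mpr (by linarith : (2:ℝ) ≤ y+1))
    (Set.mem_Ici.mpr (by linarith : (2:ℝ) ≤ (⌈y⌉₊:ℝ)+1)) (by linarith)
  rwa [Real.Gamma_nat_eq_factorial] at h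
lemma ML.fiber_card {ν : ℝ} (hν0 : 0 < ν) (K n : ℕ) :
    ((Finset.range K).filter (fun k : ℕ => ⌊ν * (k:ℝ)⌋₊ = n)).card ≤ ⌈1/ν⌉₊ := by
  set M := ⌈1/ν⌉₊ with hM
  set k₀ := ⌈(n:ℝ)/ν⌉₊ with hk₀
  refine le_trans (Finset.card_le_card (fun k hk => ?_) : _ ≤ (Finset.Ico k₀ (k₀ + M)).card) (by simp)
  simp only [Finset.mem_filter, Finset.mem_range] at hk
  obtain ⟨hkK, hfl⟩ := hk
  have hkn : (0:ℝ) ≤ ν * k := by positivity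
  have hk1 : (n:ℝ) ≤ ν * k := by rw [← hfl]; exact Nat.floor_le hkn
  have hk2 : ν * k < n + 1 := by rw [← hfl]; exact Nat.lt_floor_add_one _
  rw [Finset.mem_Ico]
  constructor
  · apply Nat.ceil_le.mpr
    rw [div_le_iff₀ hν0]
    linarith [mul_comm ν (k:ℝ)]
  · have h1 : (k:ℝ) < (n:ℝ)/ν + 1/ν := by
      rw [← add_div, lt_div_iff₀ hν0]
      linarith [mul_comm (k:ℝ) ν]
    have h2 : (n:ℝ)/ν ≤ k₀ := Nat.le_ceil _
    have h3 : (1:ℝ)/ν ≤ M := Nat.le_ceil _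
    have : (k:ℝ) < ((k₀ + M : ℕ):ℝ) := by push_cast; linarith
    exact_mod_cast this

lemma ML.sum_floor_le {ν : ℝ} (hν0 : 0 < ν) (hν1 : ν < 1) (z : ℝ) (hz : 0 ≤ z) (K : ℕ) :
    ∑ k ∈ Finset.range K, z ^ ⌊ν * k⌋₊ / (⌊ν * k⌋₊)! ≤ (⌈1/ν⌉₊ : ℝ) * Real.exp z := by
  have hmaps : ∀ k ∈ Finset.range K, ⌊ν * k⌋₊ ∈ Finset.range K := by
    intro k hk
    simp only [Finset.mem_range] at *
    have h1 : ⌊ν * k⌋₊ ≤ k := by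
      have h2 : ν * k ≤ (k:ℝ) := by nlinarith [Nat.cast_nonneg (α := ℝ) k]
      calc ⌊ν * k⌋₊ ≤ ⌊(k:ℝ)⌋₊ := Nat.floor_le_floor h2
        _ = k := Nat.floor_natCast k
    omega
  rw [← Finset.sum_fiberwise_of_maps_to hmaps (fun k : ℕ => z ^ ⌊ν * (k:ℝ)⌋₊ / (⌊ν * (k:ℝ)⌋₊)!)]
  calc ∑ n ∈ Finset.range K, ∑ k ∈ (Finset.range K).filter (fun k : ℕ => ⌊ν * (k:ℝ)⌋₊ = n),
        z ^ ⌊ν * k⌋₊ / (⌊ν * k⌋₊)!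
      ≤ ∑ n ∈ Finset.range K, (⌈1/ν⌉₊ : ℝ) * (z ^ n / n !) := by
        apply Finset.sum_le_sum
        intro n _
        rw [Finset.sum_congr rfl (fun k hk => by rw [(Finset.mem_filter.mp hk).2]),
          Finset.sum_const, nsmul_eq_mul]
        apply mul_le_mul_of_nonneg_right _ (by positivity)
        exact_mod_cast ML.fiber_card hν0 K n
    _ = (⌈1/ν⌉₊:ℝ) * ∑ n ∈ Finset.range K, z^n/(n !:ℝ) := by rw [← Finset.mul_sum]
    _ ≤ _ := mul_le_mul_of_nonneg_left (Real.sum_le_exp_of_nonneg hz K) (by positivity)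

lemma ML.term_nonneg {ν : ℝ} (hν0 : 0 < ν) (x : ℝ) (hx : 0 ≤ x) (k : ℕ) :
    0 ≤ x ^ k / Real.Gamma (ν * k + 1) := by
  have h := Real.Gamma_pos_of_pos (show (0:ℝ) < ν * k + 1 by positivity)
  positivity

lemma ML.sum_range_le {ν : ℝ} (hν0 : 0 < ν) (hν1 : ν < 1) {z : ℝ} (hz : 1 ≤ z) (K : ℕ) :
    ∑ k ∈ Finset.range K, (z ^ ν) ^ k / Real.Gamma (ν * k + 1)
      ≤ (2 * z) * ((⌈1/ν⌉₊ : ℝ) * Real.exp z) := by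
  have hz0 : (0:ℝ) < z := lt_of_lt_of_le one_pos hz
  have h1 : ∀ k : ℕ, (z ^ ν) ^ k / Real.Gamma (ν * k + 1)
      ≤ (2*z) * (z ^ ⌊ν * (k:ℝ)⌋₊ / ((⌊ν * (k:ℝ)⌋₊)! : ℝ)) := by
    intro k
    have hkn : (0:ℝ) ≤ ν * k := by positivity
    have hgam := ML.gamma_lower (ν * k) hkn
    have hgpos : 0 < Real.Gamma (ν * k + 1) := Real.Gamma_pos_of_pos (by positivity)
    have hfp : (0:ℝ) < ((⌊ν * (k:ℝ)⌋₊)! : ℝ) := by exact_mod_cast (Nat.factorial_pos _)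
    have hnum : (z ^ ν) ^ k ≤ z * z ^ ⌊ν * (k:ℝ)⌋₊ := by
      have e1 : (z ^ ν) ^ k = z ^ (ν * (k:ℝ)) := by
        rw [← Real.rpow_natCast (z ^ ν) k, ← Real.rpow_mul hz0.le]
      have e2 : ν * (k:ℝ) ≤ (⌊ν * (k:ℝ)⌋₊ : ℝ) + 1 := le_of_lt (Nat.lt_floor_add_one _)
      have e3 : z ^ (ν * (k:ℝ)) ≤ z ^ ((⌊ν * (k:ℝ)⌋₊ : ℝ) + 1) :=
        Real.rpow_le_rpow_of_exponent_le hz e2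
      rw [e1]
      calc z ^ (ν * (k:ℝ)) ≤ z ^ ((⌊ν * (k:ℝ)⌋₊ : ℝ) + 1) := e3
        _ = z ^ (⌊ν * (k:ℝ)⌋₊ + 1 : ℕ) := by
            rw [← Real.rpow_natCast z (⌊ν * (k:ℝ)⌋₊ + 1)]
            push_cast
            ring_nf
        _ = z * z ^ ⌊ν * (k:ℝ)⌋₊ := by rw [pow_succ]; ring
    calc (z ^ ν) ^ k / Real.Gamma (ν * k + 1)
        ≤ (z * z ^ ⌊ν * (k:ℝ)⌋₊) / (((⌊ν * (k:ℝ)⌋₊)! : ℝ)/2) :=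
          div_le_div₀ (by positivity) hnum (by positivity) hgam
      _ = (2*z) * (z ^ ⌊ν * (k:ℝ)⌋₊ / ((⌊ν * (k:ℝ)⌋₊)! : ℝ)) := by
          field_simp
  calc ∑ k ∈ Finset.range K, (z ^ ν) ^ k / Real.Gamma (ν * k + 1)
      ≤ ∑ k ∈ Finset.range K, (2*z) * (z ^ ⌊ν * (k:ℝ)⌋₊ / ((⌊ν * (k:ℝ)⌋₊)! : ℝ)) :=
        Finset.sum_le_sum (fun k _ => h1 k)
    _ = (2*z) * ∑ k ∈ Finset.range K, z ^ ⌊ν * (k:ℝ)⌋₊ / ((⌊ν * (k:ℝ)⌋₊)! : ℝ) := by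
        rw [← Finset.mul_sum]
    _ ≤ (2*z) * ((⌈1/ν⌉₊ : ℝ) * Real.exp z) :=
        mul_le_mul_of_nonneg_left (ML.sum_floor_le hν0 hν1 z (by linarith) K) (by positivity)

lemma ML.summable {ν : ℝ} (hν0 : 0 < ν) (hν1 : ν < 1) {z : ℝ} (hz : 1 ≤ z) :
    Summable (fun k : ℕ => (z ^ ν) ^ k / Real.Gamma (ν * k + 1)) := by
  have hz0 : (0:ℝ) < z := lt_of_lt_of_le one_pos hz
  exact summable_of_sum_range_le
    (fun k => ML.term_nonneg hν0 _ (Real.rpow_nonneg hz0.le ν) k)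
    (ML.sum_range_le hν0 hν1 hz)

lemma ML.tsum_le {ν : ℝ} (hν0 : 0 < ν) (hν1 : ν < 1) {z : ℝ} (hz : 1 ≤ z) :
    (∑' k : ℕ, (z ^ ν) ^ k / Real.Gamma (ν * k + 1)) ≤ (2 * z) * ((⌈1/ν⌉₊ : ℝ) * Real.exp z) := by
  have hz0 : (0:ℝ) < z := lt_of_lt_of_le one_pos hz
  exact Real.tsum_le_of_sum_range_le
    (fun k => ML.term_nonneg hν0 _ (Real.rpow_nonneg hz0.le ν) k)
    (ML.sum_range_le hν0 hν1 hz)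

lemma ML.log_lin_div (a b : ℝ) (ha : 0 < a) (hb : 0 ≤ b) :
    Tendsto (fun t : ℝ => Real.log (a*t + b) / t) atTop (nhds 0) := by
  have h1 : Tendsto (fun t : ℝ => a*t + b) atTop atTop :=
    tendsto_atTop_add_const_right _ b (tendsto_id.const_mul_atTop ha)
  have h2 : Tendsto (fun t : ℝ => Real.log (a*t+b) / (a*t+b)) atTop (nhds 0) :=
    (Real.isLittleO_log_id_atTop.tendsto_div_nhds_zero).comp h1
  have h3 : Tendsto (fun t : ℝ => (a*t+b)/t) atTop (nhds a) := by
    have h4 : Tendsto (fun t : ℝ => a + b/t) atTop (nhds (a + 0)) :=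
      tendsto_const_nhds.add (tendsto_const_nhds.div_atTop tendsto_id)
    rw [add_zero] at h4
    apply h4.congr'
    filter_upwards [eventually_gt_atTop (0:ℝ)] with t ht
    field_simp
  have h5 := h2.mul h3
  rw [zero_mul] at h5
  apply h5.congr'
  filter_upwards [eventually_gt_atTop (0:ℝ), h1.eventually (eventually_gt_atTop (0:ℝ))]
    with t ht hab
  field_simp
theorem stmt11 (ν c : ℝ) (hν : ν ∈ Set.Ioo (0:ℝ) 1) (hc : 0 < c)
    (E : ℝ → ℝ) (hE : ∀ x : ℝ, E x = ∑' k : ℕ, x ^ k / Real.Gamma (ν * k + 1)) :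
    Tendsto (fun t : ℝ => (1 / t) * Real.log (E (c * t ^ ν))) atTop
      (nhds (c ^ (1 / ν))) := by
  obtain ⟨hν0, hν1⟩ := hν
  set a := c ^ (1/ν) with ha_def
  have ha : 0 < a := Real.rpow_pos_of_pos hc _
  have haν : a ^ ν = c := by
    rw [ha_def, ← Real.rpow_mul hc.le, one_div, inv_mul_cancel₀ (ne_of_gt hν0), Real.rpow_one]
  have hM1 : (1:ℝ) ≤ (⌈1/ν⌉₊ : ℝ) := by
    have h0 : (0:ℝ) < 1/ν := by positivity
    have : 1 ≤ ⌈1/ν⌉₊ := Nat.one_le_ceil_iff.mpr h0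
    exact_mod_cast this
  -- the two bounding functions
  refine tendsto_of_tendsto_of_tendsto_of_le_of_le'
    (g := fun t : ℝ => ((a*t) * Real.log (a*t) - (a*t+ν+2) * Real.log (a*t+ν+1) + (a*t) - 1) / t)
    (h := fun t : ℝ => (Real.log (2*(⌈1/ν⌉₊:ℝ)*(a*t)) + a*t) / t)
    ?_ ?_ ?_ ?_
  · -- lower function tends to a
    have g1 : Tendsto (fun t : ℝ => (a*t)/(a*t+ν+1)) atTop (nhds 1) := by
      have h1 : Tendsto (fun t : ℝ => a*t+ν+1) atTop atTop := by
        have := tendsto_id.const_mul_atTop ha (f := fun t : ℝ => t) (l := atTop)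
        exact tendsto_atTop_add_const_right _ 1 (tendsto_atTop_add_const_right _ ν this)
      have h2 : Tendsto (fun t : ℝ => 1 - (ν+1)/(a*t+ν+1)) atTop (nhds (1 - 0)) :=
        tendsto_const_nhds.sub (tendsto_const_nhds.div_atTop h1)
      rw [sub_zero] at h2
      apply h2.congr'
      filter_upwards [h1.eventually (eventually_gt_atTop (0:ℝ))] with t hpos
      field_simp
      ring
    have g1' : Tendsto (fun t : ℝ => a * Real.log ((a*t)/(a*t+ν+1))) atTop (nhds 0) := by
      have h2 : Tendsto (fun t : ℝ => Real.log ((a*t)/(a*t+ν+1))) atTop (nhds (Real.log 1)) :=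
        ((Real.continuousAt_log one_ne_zero).tendsto.comp g1)
      rw [Real.log_one] at h2
      simpa using tendsto_const_nhds.mul h2
    have g2 : Tendsto (fun t : ℝ => (ν+2) * (Real.log (a*t+ν+1)/t)) atTop (nhds 0) := by
      simpa [← add_assoc] using tendsto_const_nhds.mul (ML.log_lin_div a (ν+1) ha (by linarith))
    have g3 : Tendsto (fun t : ℝ => a - 1/t) atTop (nhds (a - 0)) :=
      tendsto_const_nhds.sub (tendsto_const_nhds.div_atTop tendsto_id)
    rw [sub_zero] at g3
    have gtot := (g1'.sub g2).add g3
    rw [sub_zero, zero_add] at gtot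
    apply gtot.congr'
    filter_upwards [eventually_gt_atTop (0:ℝ), eventually_gt_atTop (1/a)] with t ht hta
    have hz0 : 0 < a*t := by positivity
    have hz1 : 0 < a*t+ν+1 := by linarith
    rw [Real.log_div (ne_of_gt hz0) (ne_of_gt hz1)]
    field_simp
    ring
  · -- upper function tends to a
    have h1 := ML.log_lin_div (2*(⌈1/ν⌉₊:ℝ)*a) 0 (by positivity) le_rfl
    have h2 : Tendsto (fun t : ℝ => Real.log ((2*(⌈1/ν⌉₊:ℝ)*a)*t + 0)/t + a) atTop (nhds (0 + a)) :=
      h1.add tendsto_const_nhds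
    rw [zero_add] at h2
    apply h2.congr'
    filter_upwards [eventually_gt_atTop (0:ℝ)] with t ht
    rw [add_zero, add_div]
    congr 1
    · ring_nf
    · field_simp
  · -- eventual lower bound
    filter_upwards [eventually_ge_atTop (1:ℝ), eventually_ge_atTop (1/a)] with t ht1 hta
    have ht0 : 0 < t := lt_of_lt_of_le one_pos ht1
    have hz : 1 ≤ a*t := by
      rw [div_le_iff₀ ha] at hta
      nlinarith
    set z := a*t with hz_def
    have hz0 : (0:ℝ) < z := lt_of_lt_of_le one_pos hz
    have hx : c * t ^ ν = z ^ ν := by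
      rw [hz_def, Real.mul_rpow ha.le ht0.le, haν]
    have hEx : E (c * t ^ ν) = ∑' k : ℕ, (z ^ ν) ^ k / Real.Gamma (ν * k + 1) := by
      rw [hE, hx]
    have hsum := ML.summable hν0 hν1 hz
    -- choose k
    set k := ⌈z/ν⌉₊ with hk_def
    have hk_lb : z/ν ≤ (k:ℝ) := Nat.le_ceil _
    have hk_ub : (k:ℝ) < z/ν + 1 := Nat.ceil_lt_add_one (by positivity)
    have hνk : z ≤ ν * k := by
      have h := mul_le_mul_of_nonneg_left hk_lb hν0.le
      rw [mul_div_cancel₀ _ (ne_of_gt hν0)] at h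
      exact h
    have hνk1 : 1 ≤ ν * (k:ℝ) := le_trans hz hνk
    set m := ⌈ν * (k:ℝ)⌉₊ with hm_def
    have hm_lb : ν * (k:ℝ) ≤ (m:ℝ) := Nat.le_ceil _
    have hm_ub : (m:ℝ) < ν * k + 1 := Nat.ceil_lt_add_one (by positivity)
    have hm_z : z ≤ (m:ℝ) := le_trans hνk hm_lb
    have hm1 : (1:ℝ) ≤ (m:ℝ) := le_trans hz hm_z
    have hm1n : 1 ≤ m := by exact_mod_cast hm1
    have hm_ub2 : (m:ℝ) ≤ z + ν + 1 := by
      have h1 : ν * (k:ℝ) ≤ ν * (z/ν + 1) := mul_le_mul_of_nonneg_left hk_ub.le hν0.le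
      have h2 : ν * (z/ν + 1) = z + ν := by field_simp
      linarith
    have hgpos : 0 < Real.Gamma (ν*k+1) := Real.Gamma_pos_of_pos (by positivity)
    have hxp : (0:ℝ) < (z^ν)^k := pow_pos (Real.rpow_pos_of_pos hz0 ν) k
    have hterm : (z^ν)^k / Real.Gamma (ν*k+1) ≤ E (c * t ^ ν) := by
      rw [hEx]
      exact Summable.le_tsum hsum k (fun j _ => ML.term_nonneg hν0 _ (Real.rpow_nonneg hz0.le ν) j)
    have hG_le : Real.log (Real.Gamma (ν*k+1)) ≤ (z+ν+2) * Real.log (z+ν+1) - (z - 1) := by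
      have h1 : Real.Gamma (ν*(k:ℝ)+1) ≤ (m ! : ℝ) := ML.gamma_upper _ hνk1
      have h2 : Real.log (Real.Gamma (ν*k+1)) ≤ Real.log (m !) := Real.log_le_log hgpos h1
      have h3 := ML.log_factorial_le m hm1n
      have h4 : ((m:ℝ)+1) * Real.log m ≤ (z+ν+2) * Real.log (z+ν+1) := by
        apply mul_le_mul (by linarith) (Real.log_le_log (by linarith) (by linarith))
          (Real.log_nonneg hm1) (by nlinarith)
      linarith
    have hmain : z * Real.log z ≤ (k:ℝ) * (ν * Real.log z) := by
      have hlz : 0 ≤ Real.log z := Real.log_nonneg hz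
      have h1 := mul_le_mul_of_nonneg_right hk_lb (mul_nonneg hν0.le hlz)
      have h2 : z/ν * (ν * Real.log z) = z * Real.log z := by field_simp
      linarith
    have hlogE : z * Real.log z - (z+ν+2) * Real.log (z+ν+1) + z - 1 ≤ Real.log (E (c * t ^ ν)) := by
      have h5 := Real.log_le_log (by positivity) hterm
      rw [Real.log_div (ne_of_gt hxp) (ne_of_gt hgpos), Real.log_pow, Real.log_rpow hz0] at h5
      have : (k:ℝ) * (ν * Real.log z) - Real.log (Real.Gamma (ν*k+1)) ≤ Real.log (E (c * t ^ ν)) := by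
        exact_mod_cast le_trans (le_of_eq rfl) h5
      linarith
    -- conclude: divide by t
    have hfinal := mul_le_mul_of_nonneg_left hlogE (le_of_lt (one_div_pos.mpr ht0))
    calc (z * Real.log z - (z+ν+2) * Real.log (z+ν+1) + z - 1) / t
        = (1/t) * (z * Real.log z - (z+ν+2) * Real.log (z+ν+1) + z - 1) := by ring
      _ ≤ (1/t) * Real.log (E (c * t ^ ν)) := hfinal
  · -- eventual upper bound
    filter_upwards [eventually_ge_atTop (1:ℝ), eventually_ge_atTop (1/a)] with t ht1 hta
    have ht0 : 0 < t := lt_of_lt_of_le one_pos ht1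
    have hz : 1 ≤ a*t := by
      rw [div_le_iff₀ ha] at hta
      nlinarith
    set z := a*t with hz_def
    have hz0 : (0:ℝ) < z := lt_of_lt_of_le one_pos hz
    have hx : c * t ^ ν = z ^ ν := by
      rw [hz_def, Real.mul_rpow ha.le ht0.le, haν]
    have hEx : E (c * t ^ ν) = ∑' k : ℕ, (z ^ ν) ^ k / Real.Gamma (ν * k + 1) := by
      rw [hE, hx]
    have hsum := ML.summable hν0 hν1 hz
    have hup : E (c * t ^ ν) ≤ (2*z) * ((⌈1/ν⌉₊:ℝ) * Real.exp z) := by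
      rw [hEx]; exact ML.tsum_le hν0 hν1 hz
    have hone : (1:ℝ) ≤ E (c * t ^ ν) := by
      have h1 := Summable.le_tsum hsum 0 (fun j _ => ML.term_nonneg hν0 _ (Real.rpow_nonneg hz0.le ν) j)
      rw [← hEx] at h1
      simpa [Real.Gamma_one] using h1
    have hEpos : 0 < E (c * t ^ ν) := lt_of_lt_of_le one_pos hone
    have hlogU : Real.log (E (c * t ^ ν)) ≤ Real.log (2*(⌈1/ν⌉₊:ℝ)*z) + z := by
      calc Real.log (E (c * t ^ ν)) ≤ Real.log ((2*z) * ((⌈1/ν⌉₊:ℝ) * Real.exp z)) :=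
            Real.log_le_log hEpos hup
        _ = Real.log (2*(⌈1/ν⌉₊:ℝ)*z) + z := by
            rw [show (2*z)*((⌈1/ν⌉₊:ℝ)*Real.exp z) = (2*(⌈1/ν⌉₊:ℝ)*z) * Real.exp z by ring,
              Real.log_mul (by positivity) (Real.exp_ne_zero _), Real.log_exp]
    have hfinal := mul_le_mul_of_nonneg_left hlogU (le_of_lt (one_div_pos.mpr ht0))
    calc (1/t) * Real.log (E (c * t ^ ν)) ≤ (1/t) * (Real.log (2*(⌈1/ν⌉₊:ℝ)*z) + z) := hfinal
      _ = (Real.log (2*(⌈1/ν⌉₊:ℝ)*z) + z) / t := by ring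
end
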